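/- In the two-state i.i.d. model with m = c n^{2+α} (c > 0, α > 0) and a_n = c' n^{-(1+β)} (c' > 0, β > α/4), let Ȳ_{Π(1)} = (1/m) Σ_{k=1}^m Z_1(k) be the empirical frequency of state 1 in user 1's obfuscated sequence, and let B^(n) = {x ∈ (0,1) : p_1 − Δ_n ≤ x ≤ p_1 + Δ_n} with Δ_n = n^{-(1+α/4)}. Then P(Ȳ_{Π(1)} ∈ B^(n)) → 1 as n → ∞. -/

import Mathlib

open Filter Set MeasureTheory ProbabilityTheory

noncomputable section

lemma key_conc {Ω : Type} [mΩ : MeasurableSpace Ω] [StandardBorelSpace Ω]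
    (μ : Measure Ω) [IsProbabilityMeasure μ]
    (R : Ω → ℝ) (hR : Measurable R)
    (hle : MeasurableSpace.comap R inferInstance ≤ mΩ)
    (Z : ℕ → Ω → Bool) (hZ : ∀ k, Measurable (Z k))
    (hCI : iCondIndepFun (MeasurableSpace.comap R inferInstance) hle
      (m := fun _ : ℕ => inferInstance) Z μ)
    (p₁ : ℝ)
    (hCL : ∀ k, μ[(fun ω => if Z k ω then (1:ℝ) else 0) |
        MeasurableSpace.comap R inferInstance]
      =ᵐ[μ] fun ω => p₁ + (1 - 2 * p₁) * R ω)
    (aa : ℝ) (haa : 0 ≤ aa) (hRae : ∀ᵐ ω ∂μ, R ω ∈ Set.Icc 0 aa)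
    (M : ℕ) (hM : 0 < M) (ε : ℝ) (hε : 0 < ε) :
    μ {ω | (M : ℝ) * ε ≤
        |(∑ k ∈ Finset.range M, (if Z k ω then (1:ℝ) else 0))
          - M * (p₁ + (1 - 2 * p₁) * R ω)|}
      ≤ ENNReal.ofReal (1 / (4 * M * ε ^ 2)) := by
  set Q : Ω → ℝ := fun ω => p₁ + (1 - 2 * p₁) * R ω with hQdef
  set f : ℕ → Ω → ℝ := fun k ω => if Z k ω then (1:ℝ) else 0 with hfdef
  set C : ℝ := |p₁| + |1 - 2 * p₁| * aa with hCdef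
  have hC0 : 0 ≤ C := by positivity
  -- measurability facts
  have hRmR : Measurable[(MeasurableSpace.comap R inferInstance)] R := measurable_iff_comap_le.mpr le_rfl
  have hQmR : StronglyMeasurable[(MeasurableSpace.comap R inferInstance)] Q :=
    ((measurable_const.add (measurable_const.mul hRmR))).stronglyMeasurable
  have hQm : Measurable Q := measurable_const.add (measurable_const.mul hR)
  have hAm : ∀ k, MeasurableSet (Z k ⁻¹' {true}) := fun k =>
    (hZ k) (measurableSet_singleton true)
  have hfm : ∀ k, Measurable (f k) := fun k => by
    have : f k = (Z k ⁻¹' {true}).indicator (fun _ => (1:ℝ)) := by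
      funext ω; by_cases h : Z k ω <;> simp [hfdef, h, Set.indicator_apply]
    rw [this]; exact measurable_const.indicator (hAm k)
  have hQb : ∀ᵐ ω ∂μ, ‖Q ω‖ ≤ C := by
    filter_upwards [hRae] with ω hω
    have h1 : |R ω| ≤ aa := by rw [abs_of_nonneg hω.1]; exact hω.2
    calc ‖Q ω‖ ≤ |p₁| + |(1 - 2 * p₁) * R ω| := by
          simpa [Real.norm_eq_abs] using abs_add_le p₁ ((1 - 2 * p₁) * R ω)
      _ ≤ C := by
          rw [abs_mul, hCdef]
          have := mul_le_mul_of_nonneg_left h1 (abs_nonneg (1 - 2 * p₁))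
          linarith
  have hbdd_int : ∀ (g : Ω → ℝ) (c : ℝ), Measurable g → (∀ᵐ ω ∂μ, ‖g ω‖ ≤ c) →
      Integrable g μ := fun g c hg hb =>
    (integrable_const c).mono' hg.aestronglyMeasurable hb
  have hfb : ∀ k, ∀ᵐ ω ∂μ, ‖f k ω‖ ≤ 1 := fun k => ae_of_all μ fun ω => by
    by_cases h : Z k ω <;> simp [hfdef, h]
  have hfint : ∀ k, Integrable (f k) μ := fun k => hbdd_int _ 1 (hfm k) (hfb k)
  have hQint : Integrable Q μ := hbdd_int _ C hQm hQb
  have hQ2int : Integrable (fun ω => Q ω ^ 2) μ := by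
    refine hbdd_int _ (C ^ 2) (hQm.pow_const 2) ?_
    filter_upwards [hQb] with ω hω
    simpa [abs_pow, Real.norm_eq_abs] using pow_le_pow_left₀ (abs_nonneg _) hω 2
  have hfQint : ∀ k, Integrable (fun ω => f k ω * Q ω) μ := fun k => by
    refine hbdd_int _ C ((hfm k).mul hQm) ?_
    filter_upwards [hQb, hfb k] with ω h1 h2
    calc ‖f k ω * Q ω‖ = ‖f k ω‖ * ‖Q ω‖ := norm_mul _ _
      _ ≤ 1 * C := mul_le_mul h2 h1 (norm_nonneg _) zero_le_one
      _ = C := one_mul C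
  have hffint : ∀ j k, Integrable (fun ω => f j ω * f k ω) μ := fun j k => by
    refine hbdd_int _ 1 ((hfm j).mul (hfm k)) ?_
    filter_upwards [hfb j, hfb k] with ω h1 h2
    calc ‖f j ω * f k ω‖ = ‖f j ω‖ * ‖f k ω‖ := norm_mul _ _
      _ ≤ 1 * 1 := mul_le_mul h1 h2 (norm_nonneg _) zero_le_one
      _ = 1 := one_mul 1
  -- first moments
  have hIf : ∀ k, ∫ ω, f k ω ∂μ = ∫ ω, Q ω ∂μ := fun k => by
    rw [← integral_condExp hle]
    exact integral_congr_ae (hCL k)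
  -- mixed moment with Q
  have hIfQ : ∀ k, ∫ ω, f k ω * Q ω ∂μ = ∫ ω, Q ω ^ 2 ∂μ := fun k => by
    have h1 : μ[fun ω => Q ω * f k ω | (MeasurableSpace.comap R inferInstance)] =ᵐ[μ] fun ω => Q ω * (μ[f k | (MeasurableSpace.comap R inferInstance)]) ω := by
      exact condExp_stronglyMeasurable_mul_of_bound hle hQmR (hfint k) C hQb
    have h2 : μ[fun ω => Q ω * f k ω | (MeasurableSpace.comap R inferInstance)] =ᵐ[μ] fun ω => Q ω ^ 2 := by
      filter_upwards [h1, hCL k] with ω hω1 hω2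
      rw [hω1, hω2]; ring
    have h3 : Integrable (fun ω => Q ω * f k ω) μ := by
      simpa [mul_comm] using hfQint k
    calc ∫ ω, f k ω * Q ω ∂μ = ∫ ω, Q ω * f k ω ∂μ := by simp [mul_comm]
      _ = ∫ ω, (μ[fun ω => Q ω * f k ω | (MeasurableSpace.comap R inferInstance)]) ω ∂μ := (integral_condExp hle).symm
      _ = ∫ ω, Q ω ^ 2 ∂μ := integral_congr_ae h2
  -- cross moments
  have hIff : ∀ j k, j ≠ k → ∫ ω, f j ω * f k ω ∂μ = ∫ ω, Q ω ^ 2 ∂μ := by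
    intro j k hjk
    have hcd : CondIndepFun (MeasurableSpace.comap R inferInstance) hle (Z j) (Z k) μ := hCI.condIndepFun hjk
    rw [condIndepFun_iff_condExp_inter_preimage_eq_mul (hZ j) (hZ k)] at hcd
    have h1 := hcd {true} {true} (measurableSet_singleton true) (measurableSet_singleton true)
    have hind : ∀ i, (fun ω => if Z i ω then (1:ℝ) else 0)
        = (Z i ⁻¹' {true}).indicator (fun _ => (1:ℝ)) := fun i => by
      funext ω; by_cases h : Z i ω <;> simp [hfdef, h, Set.indicator_apply]
    have hprod : (fun ω => f j ω * f k ω)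
        = ((Z j ⁻¹' {true}) ∩ (Z k ⁻¹' {true})).indicator (fun _ => (1:ℝ)) := by
      funext ω; by_cases h1 : Z j ω <;> by_cases h2 : Z k ω <;>
        simp [hfdef, h1, h2, Set.indicator_apply]
    have h2 : μ[fun ω => f j ω * f k ω | (MeasurableSpace.comap R inferInstance)] =ᵐ[μ] fun ω => Q ω ^ 2 := by
      have hCLj := hCL j; have hCLk := hCL k
      rw [hind j] at hCLj; rw [hind k] at hCLk
      rw [hprod]
      filter_upwards [h1, hCLj, hCLk] with ω hω1 hω2 hω3
      rw [hω1, hω2, hω3]; ring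
    calc ∫ ω, f j ω * f k ω ∂μ
        = ∫ ω, (μ[fun ω => f j ω * f k ω | (MeasurableSpace.comap R inferInstance)]) ω ∂μ :=
          (integral_condExp hle).symm
      _ = ∫ ω, Q ω ^ 2 ∂μ := integral_congr_ae h2
  -- the centered sum
  set T : Ω → ℝ := fun ω => ∑ k ∈ Finset.range M, (f k ω - Q ω) with hTdef
  have hgint : ∀ j k, Integrable (fun ω => (f j ω - Q ω) * (f k ω - Q ω)) μ := by
    intro j k
    have : (fun ω => (f j ω - Q ω) * (f k ω - Q ω))
        = fun ω => f j ω * f k ω - f j ω * Q ω - f k ω * Q ω + Q ω ^ 2 := by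
      funext ω; ring
    rw [this]
    exact (((hffint j k).sub (hfQint j)).sub (hfQint k)).add hQ2int
  have hIg : ∀ j k, ∫ ω, (f j ω - Q ω) * (f k ω - Q ω) ∂μ
      = (if j = k then (∫ ω, Q ω ∂μ) - ∫ ω, Q ω ^ 2 ∂μ else 0) := by
    intro j k
    have hexp : (fun ω => (f j ω - Q ω) * (f k ω - Q ω))
        = fun ω => f j ω * f k ω - f j ω * Q ω - f k ω * Q ω + Q ω ^ 2 := by
      funext ω; ring
    have hint1 : Integrable (fun ω => f j ω * f k ω - f j ω * Q ω - f k ω * Q ω) μ := by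
      exact ((hffint j k).sub (hfQint j)).sub (hfQint k)
    have hint2 : Integrable (fun ω => f j ω * f k ω - f j ω * Q ω) μ := by
      exact (hffint j k).sub (hfQint j)
    rw [hexp, integral_add hint1 hQ2int, integral_sub hint2 (hfQint k),
      integral_sub (hffint j k) (hfQint j)]
    by_cases hjk : j = k
    · subst hjk
      have hff : (fun ω => f j ω * f j ω) = f j := by
        funext ω; by_cases h : Z j ω <;> simp [hfdef, h]
      rw [if_pos rfl, hff, hIf j, hIfQ j]
      linarith
    · rw [if_neg hjk, hIff j k hjk, hIfQ j, hIfQ k]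
      linarith
  have hT2 : ∫ ω, T ω ^ 2 ∂μ = (M : ℝ) * ((∫ ω, Q ω ∂μ) - ∫ ω, Q ω ^ 2 ∂μ) := by
    have hsq : ∀ ω, T ω ^ 2 = ∑ j ∈ Finset.range M, ∑ k ∈ Finset.range M,
        (f j ω - Q ω) * (f k ω - Q ω) := fun ω => by
      rw [sq, hTdef]; exact Finset.sum_mul_sum _ _ _ _
    calc ∫ ω, T ω ^ 2 ∂μ
        = ∫ ω, ∑ j ∈ Finset.range M, ∑ k ∈ Finset.range M,
            (f j ω - Q ω) * (f k ω - Q ω) ∂μ := by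
          exact integral_congr_ae (ae_of_all μ hsq)
      _ = ∑ j ∈ Finset.range M, ∫ ω, ∑ k ∈ Finset.range M,
            (f j ω - Q ω) * (f k ω - Q ω) ∂μ := by
          exact integral_finset_sum _ fun j _ => integrable_finset_sum _ fun k _ => hgint j k
      _ = ∑ j ∈ Finset.range M, ∑ k ∈ Finset.range M,
            ∫ ω, (f j ω - Q ω) * (f k ω - Q ω) ∂μ := by
          exact Finset.sum_congr rfl fun j _ => integral_finset_sum _ fun k _ => hgint j k
      _ = ∑ j ∈ Finset.range M, ((∫ ω, Q ω ∂μ) - ∫ ω, Q ω ^ 2 ∂μ) := by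
          refine Finset.sum_congr rfl fun j hj => ?_
          rw [Finset.sum_eq_single_of_mem j hj]
          · rw [hIg j j, if_pos rfl]
          · intro k _ hkj
            rw [hIg j k, if_neg (Ne.symm hkj)]
      _ = (M : ℝ) * ((∫ ω, Q ω ∂μ) - ∫ ω, Q ω ^ 2 ∂μ) := by
          rw [Finset.sum_const, Finset.card_range, nsmul_eq_mul]
  have hT2le : ∫ ω, T ω ^ 2 ∂μ ≤ (M : ℝ) / 4 := by
    rw [hT2]
    have h14 : (∫ ω, Q ω ∂μ) - ∫ ω, Q ω ^ 2 ∂μ ≤ 1 / 4 := by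
      have : ∫ ω, (Q ω - Q ω ^ 2) ∂μ ≤ ∫ _ω, (1:ℝ)/4 ∂μ := by
        refine integral_mono (hQint.sub hQ2int) (integrable_const _) fun ω => ?_
        show Q ω - Q ω ^ 2 ≤ 1 / 4
        obtain ⟨q, hq⟩ : ∃ q, Q ω = q := ⟨_, rfl⟩
        rw [hq]
        nlinarith [sq_nonneg (2 * q - 1)]
      rw [integral_sub hQint hQ2int] at this
      simpa using this
    have hM0 : (0:ℝ) ≤ M := Nat.cast_nonneg M
    calc (M : ℝ) * ((∫ ω, Q ω ∂μ) - ∫ ω, Q ω ^ 2 ∂μ) ≤ (M : ℝ) * (1/4) :=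
        mul_le_mul_of_nonneg_left h14 hM0
      _ = (M : ℝ) / 4 := by ring
  -- Markov / Chebyshev
  have hT2int : Integrable (fun ω => T ω ^ 2) μ := by
    have hexp : (fun ω => T ω ^ 2) = fun ω => ∑ j ∈ Finset.range M, ∑ k ∈ Finset.range M,
        (f j ω - Q ω) * (f k ω - Q ω) := by
      funext ω; rw [sq, hTdef]; exact Finset.sum_mul_sum _ _ _ _
    rw [hexp]
    exact integrable_finset_sum _ fun j _ => integrable_finset_sum _ fun k _ => hgint j k
  have hmar := mul_meas_ge_le_integral_of_nonneg
    (ae_of_all μ fun ω => sq_nonneg (T ω)) hT2int (((M : ℝ) * ε) ^ 2)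
  have hMε : (0:ℝ) < (M : ℝ) * ε := by
    have : (0:ℝ) < M := Nat.cast_pos.mpr hM
    positivity
  have hsub : {ω | (M : ℝ) * ε ≤ |T ω|} ⊆ {ω | ((M : ℝ) * ε) ^ 2 ≤ T ω ^ 2} := by
    intro ω hω
    have := pow_le_pow_left₀ hMε.le hω 2
    simpa [sq_abs] using this
  have hne : μ {ω | ((M : ℝ) * ε) ^ 2 ≤ T ω ^ 2} ≠ ⊤ := measure_ne_top μ _
  have htR : (μ {ω | ((M : ℝ) * ε) ^ 2 ≤ T ω ^ 2}).toReal ≤ 1 / (4 * M * ε ^ 2) := by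
    have h1 : ((M : ℝ) * ε) ^ 2 * (μ {ω | ((M : ℝ) * ε) ^ 2 ≤ T ω ^ 2}).toReal
        ≤ (M : ℝ) / 4 := le_trans hmar hT2le
    have h2 : (0:ℝ) < ((M : ℝ) * ε) ^ 2 := by positivity
    have h3 := (le_div_iff₀' h2).mpr h1
    have h4 : (M : ℝ) / 4 / ((M : ℝ) * ε) ^ 2 = 1 / (4 * M * ε ^ 2) := by
      have : (0:ℝ) < M := Nat.cast_pos.mpr hM
      field_simp
    rwa [h4] at h3
  calc μ {ω | (M : ℝ) * ε ≤
        |(∑ k ∈ Finset.range M, (if Z k ω then (1:ℝ) else 0))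
          - M * (p₁ + (1 - 2 * p₁) * R ω)|}
      = μ {ω | (M : ℝ) * ε ≤ |T ω|} := by
        congr 1
        ext ω
        have : T ω = (∑ k ∈ Finset.range M, (if Z k ω then (1:ℝ) else 0))
            - M * (p₁ + (1 - 2 * p₁) * R ω) := by
          show (∑ k ∈ Finset.range M, (f k ω - Q ω)) = _
          rw [Finset.sum_sub_distrib, Finset.sum_const, Finset.card_range, nsmul_eq_mul]
        simp only [Set.mem_setOf_eq, this]
    _ ≤ μ {ω | ((M : ℝ) * ε) ^ 2 ≤ T ω ^ 2} := measure_mono hsub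
    _ ≤ ENNReal.ofReal (1 / (4 * M * ε ^ 2)) :=
        (ENNReal.le_ofReal_iff_toReal_le hne (by positivity)).mpr htR


/-- The uniform probability measure on the interval `[0, a]`. -/
def unifIcc (a : ℝ) : Measure ℝ :=
  (ENNReal.ofReal a)⁻¹ • (volume.restrict (Set.Icc 0 a))

/-- **Concentration of user 1's empirical frequency.**  In the two-state i.i.d. model with
`m = c n^{2+α}` observations (`c > 0`, `α > 0`) and noise level `a_n = c' n^{-(1+β)}`
(`c' > 0`, `β > α/4`), user `1`'s obfuscated bits `Z_1(1), …, Z_1(m)` are (conditionally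
on `R₁ ~ Uniform[0, a_n]`) i.i.d. `Bernoulli(Q₁)` with `Q₁ = p₁ + (1 - 2p₁) R₁`.  Then the
empirical frequency `Ȳ_{Π(1)} = (1/m) ∑_{k=1}^m Z_1(k)` of state `1` lies in
`B⁽ⁿ⁾ = {x ∈ (0,1) : p₁ - Δ_n ≤ x ≤ p₁ + Δ_n}`, `Δ_n = n^{-(1+α/4)}`, with probability
tending to `1` as `n → ∞`. -/
theorem user_one_empirical_frequency_concentrates
    (p₁ : ℝ) (hp₁ : p₁ ∈ Set.Ioo (0:ℝ) 1)
    (c α c' β : ℝ) (hc : 0 < c) (hα : 0 < α) (hc' : 0 < c') (hβ : α / 4 < β)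
    (m : ℕ → ℕ) (hm : ∀ n, m n = ⌈c * (n : ℝ) ^ ((2:ℝ) + α)⌉₊)
    (a Δ : ℕ → ℝ)
    (ha : ∀ n, a n = c' * (n : ℝ) ^ (-(1 + β)))
    (hΔ : ∀ n, Δ n = (n : ℝ) ^ (-(1 + α / 4)))
    (Ω : ℕ → Type) (mΩ : ∀ n, MeasurableSpace (Ω n))
    [sb : ∀ n, StandardBorelSpace (Ω n)]
    (μ : (n : ℕ) → Measure (Ω n)) [hprob : ∀ n, IsProbabilityMeasure (μ n)]
    (R : (n : ℕ) → Ω n → ℝ) (hRmeas : ∀ n, Measurable (R n))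
    (hRle : ∀ n, MeasurableSpace.comap (R n) inferInstance ≤ mΩ n)
    (hRlaw : ∀ n, Measure.map (R n) (μ n) = unifIcc (a n))
    (Z : (n : ℕ) → ℕ → Ω n → Bool) (hZmeas : ∀ n k, Measurable (Z n k))
    -- given `R₁`, the obfuscated bits are conditionally independent,
    (hZcondIndep : ∀ n, iCondIndepFun (MeasurableSpace.comap (R n) inferInstance) (hRle n)
      (m := fun _ : ℕ => inferInstance) (Z n) (μ n))
    -- and each is conditionally `Bernoulli(Q₁)` with `Q₁ = p₁ + (1 - 2 p₁) R₁`: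
    (hZcondLaw : ∀ n k,
      (μ n)[(fun ω => if Z n k ω then (1:ℝ) else 0) |
          MeasurableSpace.comap (R n) inferInstance]
        =ᵐ[μ n] fun ω => p₁ + (1 - 2 * p₁) * R n ω) :
    Tendsto (fun n => μ n {ω |
        (∑ k ∈ Finset.range (m n), (if Z n k ω then (1:ℝ) else 0)) / (m n : ℝ)
          ∈ Set.Icc (p₁ - Δ n) (p₁ + Δ n) ∩ Set.Ioo 0 1})
      atTop (nhds 1) := by
  obtain ⟨hp0, hp1⟩ := hp₁
  -- the error bound
  set δ : ℕ → ENNReal := fun n => ENNReal.ofReal ((c * (n : ℝ) ^ (α / 2))⁻¹) with hδdef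
  have hδ0 : Tendsto δ atTop (nhds 0) := by
    rw [← ENNReal.ofReal_zero]
    apply (ENNReal.continuous_ofReal.tendsto 0).comp
    have h1 : Tendsto (fun n : ℕ => c * (n : ℝ) ^ (α / 2)) atTop atTop :=
      Tendsto.const_mul_atTop hc
        ((tendsto_rpow_atTop (by linarith)).comp tendsto_natCast_atTop_atTop)
    exact h1.inv_tendsto_atTop
  -- Δ tends to zero
  have hΔ0 : Tendsto Δ atTop (nhds 0) := by
    have h1 : Tendsto (fun x : ℝ => x ^ (-(1 + α / 4))) atTop (nhds 0) := by
      have := tendsto_rpow_neg_atTop (y := 1 + α / 4) (by linarith)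
      simpa using this
    exact ((h1.comp tendsto_natCast_atTop_atTop).congr fun n => (hΔ n).symm)
  have hev3 : ∀ᶠ n in atTop, Δ n < p₁ := hΔ0.eventually_lt_const hp0
  have hev4 : ∀ᶠ n in atTop, Δ n < 1 - p₁ := hΔ0.eventually_lt_const (by linarith)
  have hev1 : ∀ᶠ n : ℕ in atTop, 1 ≤ n := eventually_ge_atTop 1
  -- eventually `a n ≤ Δ n / 2`
  have hev2 : ∀ᶠ n : ℕ in atTop, a n ≤ Δ n / 2 := by
    have hx : Tendsto (fun n : ℕ => c' * (n : ℝ) ^ (α / 4 - β)) atTop (nhds 0) := by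
      have h1 : Tendsto (fun x : ℝ => x ^ (α / 4 - β)) atTop (nhds 0) := by
        have := tendsto_rpow_neg_atTop (y := β - α / 4) (by linarith)
        simpa [show -(β - α / 4) = α / 4 - β by ring] using this
      have h2 := (h1.comp tendsto_natCast_atTop_atTop).const_mul c'
      simpa using h2
    filter_upwards [hx.eventually_lt_const (by norm_num : (0:ℝ) < 1/2),
      eventually_ge_atTop 1] with n hb h1
    have hn0 : (0:ℝ) < n := by exact_mod_cast h1
    have hsplit : (n : ℝ) ^ (-(1 + β)) = (n : ℝ) ^ (α / 4 - β) * (n : ℝ) ^ (-(1 + α / 4)) := by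
      rw [← Real.rpow_add hn0]; congr 1; ring
    have hΔpos : (0:ℝ) ≤ (n : ℝ) ^ (-(1 + α / 4)) := Real.rpow_nonneg hn0.le _
    rw [ha n, hΔ n, hsplit]
    calc c' * ((n : ℝ) ^ (α / 4 - β) * (n : ℝ) ^ (-(1 + α / 4)))
        = (c' * (n : ℝ) ^ (α / 4 - β)) * (n : ℝ) ^ (-(1 + α / 4)) := by ring
      _ ≤ (1/2) * (n : ℝ) ^ (-(1 + α / 4)) :=
          mul_le_mul_of_nonneg_right hb.le hΔpos
      _ = (n : ℝ) ^ (-(1 + α / 4)) / 2 := by ring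
  -- the main eventual lower bound
  have hmain : ∀ᶠ n : ℕ in atTop,
      1 - δ n ≤ μ n {ω |
        (∑ k ∈ Finset.range (m n), (if Z n k ω then (1:ℝ) else 0)) / (m n : ℝ)
          ∈ Set.Icc (p₁ - Δ n) (p₁ + Δ n) ∩ Set.Ioo 0 1} := by
    filter_upwards [hev1, hev2, hev3, hev4] with n h1 h2 h3 h4
    have hn0 : (0:ℝ) < n := by exact_mod_cast h1
    have hΔpos : 0 < Δ n := by rw [hΔ n]; exact Real.rpow_pos_of_pos hn0 _
    have hM1 : 0 < m n := by
      rw [hm n]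
      exact Nat.ceil_pos.mpr (by positivity)
    have hMr : (0:ℝ) < (m n : ℝ) := Nat.cast_pos.mpr hM1
    have hMreal : c * (n : ℝ) ^ ((2:ℝ) + α) ≤ (m n : ℝ) := by
      rw [hm n]; exact Nat.le_ceil _
    have han : 0 ≤ a n := by
      rw [ha n]; positivity
    -- R is a.s. in [0, a n]
    have hco : μ n {ω | R n ω ∉ Set.Icc 0 (a n)} = 0 := by
      have hset : {ω | R n ω ∉ Set.Icc 0 (a n)} = R n ⁻¹' (Set.Icc 0 (a n))ᶜ := rfl
      rw [hset, ← Measure.map_apply (hRmeas n) measurableSet_Icc.compl, hRlaw n]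
      show ((ENNReal.ofReal (a n))⁻¹ • volume.restrict (Set.Icc 0 (a n)))
          (Set.Icc 0 (a n))ᶜ = 0
      rw [Measure.smul_apply, Measure.restrict_apply measurableSet_Icc.compl]
      simp [Set.compl_inter_self]
    have hRae : ∀ᵐ ω ∂(μ n), R n ω ∈ Set.Icc 0 (a n) := by
      rw [ae_iff]; exact hco
    have hε : 0 < Δ n / 2 := by linarith
    have hKey := key_conc (μ n) (R n) (hRmeas n) (hRle n) (Z n) (hZmeas n)
      (hZcondIndep n) p₁ (hZcondLaw n) (a n) han hRae (m n) hM1 (Δ n / 2) hε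
    -- event inclusion
    have hincl : {ω |
        (∑ k ∈ Finset.range (m n), (if Z n k ω then (1:ℝ) else 0)) / (m n : ℝ)
          ∈ Set.Icc (p₁ - Δ n) (p₁ + Δ n) ∩ Set.Ioo 0 1}ᶜ ⊆
        {ω | (m n : ℝ) * (Δ n / 2) ≤
          |(∑ k ∈ Finset.range (m n), (if Z n k ω then (1:ℝ) else 0))
            - (m n : ℝ) * (p₁ + (1 - 2 * p₁) * R n ω)|}
        ∪ {ω | R n ω ∉ Set.Icc 0 (a n)} := by
      intro ω hω
      simp only [Set.mem_compl_iff, Set.mem_setOf_eq] at hω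
      by_contra hcon
      simp only [Set.mem_union, Set.mem_setOf_eq, not_or, not_le, not_not] at hcon
      obtain ⟨hT, hRω⟩ := hcon
      apply hω
      set Sv : ℝ := ∑ k ∈ Finset.range (m n), (if Z n k ω then (1:ℝ) else 0) with hSv
      set Qv : ℝ := p₁ + (1 - 2 * p₁) * R n ω with hQv
      have habs1 : |Sv / (m n : ℝ) - Qv| < Δ n / 2 := by
        have heq : Sv / (m n : ℝ) - Qv = (Sv - (m n : ℝ) * Qv) / (m n : ℝ) := by
          field_simp
        rw [heq, abs_div, abs_of_pos hMr]
        rw [div_lt_iff₀ hMr]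
        calc |Sv - (m n : ℝ) * Qv| < (m n : ℝ) * (Δ n / 2) := hT
          _ = Δ n / 2 * (m n : ℝ) := by ring
      have habs2 : |Qv - p₁| ≤ Δ n / 2 := by
        have h12 : |1 - 2 * p₁| ≤ 1 := abs_le.mpr ⟨by linarith, by linarith⟩
        have hRabs : |R n ω| ≤ a n := by
          rw [abs_of_nonneg hRω.1]; exact hRω.2
        calc |Qv - p₁| = |1 - 2 * p₁| * |R n ω| := by
              rw [hQv]; rw [show p₁ + (1 - 2 * p₁) * R n ω - p₁ = (1 - 2*p₁) * R n ω by ring,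
                abs_mul]
          _ ≤ 1 * a n := mul_le_mul h12 hRabs (abs_nonneg _) zero_le_one
          _ = a n := one_mul _
          _ ≤ Δ n / 2 := h2
      have habs : |Sv / (m n : ℝ) - p₁| < Δ n := by
        calc |Sv / (m n : ℝ) - p₁| ≤ |Sv / (m n : ℝ) - Qv| + |Qv - p₁| := by
              have := abs_sub_le (Sv / (m n : ℝ)) Qv p₁
              simpa using this
          _ < Δ n := by linarith
      obtain ⟨hl, hr⟩ := abs_lt.mp habs
      constructor
      · exact ⟨by linarith, by linarith⟩
      · exact ⟨by linarith, by linarith⟩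
    -- ratio bound
    have hratio : 1 / (4 * (m n : ℝ) * (Δ n / 2) ^ 2) ≤ (c * (n : ℝ) ^ (α / 2))⁻¹ := by
      have hδ2 : Δ n ^ 2 = (n : ℝ) ^ ((-(1 + α / 4)) * 2) := by
        rw [hΔ n, Real.rpow_mul hn0.le, Real.rpow_two]
      have heq : (c * (n : ℝ) ^ ((2:ℝ) + α)) * (n : ℝ) ^ ((-(1 + α / 4)) * 2)
          = c * (n : ℝ) ^ (α / 2) := by
        rw [mul_assoc, ← Real.rpow_add hn0]
        congr 2
        ring
      have hle1 : c * (n : ℝ) ^ (α / 2) ≤ (m n : ℝ) * Δ n ^ 2 := by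
        rw [hδ2, ← heq]
        exact mul_le_mul_of_nonneg_right hMreal (Real.rpow_nonneg hn0.le _)
      have hpos : (0:ℝ) < c * (n : ℝ) ^ (α / 2) := by positivity
      have h4 : 4 * (m n : ℝ) * (Δ n / 2) ^ 2 = (m n : ℝ) * Δ n ^ 2 := by ring
      rw [h4, ← one_div]
      exact one_div_le_one_div_of_le hpos hle1
    -- assemble
    have hcompl : μ n {ω |
        (∑ k ∈ Finset.range (m n), (if Z n k ω then (1:ℝ) else 0)) / (m n : ℝ)
          ∈ Set.Icc (p₁ - Δ n) (p₁ + Δ n) ∩ Set.Ioo 0 1}ᶜ ≤ δ n := by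
      calc μ n _ ≤ μ n ({ω | (m n : ℝ) * (Δ n / 2) ≤
            |(∑ k ∈ Finset.range (m n), (if Z n k ω then (1:ℝ) else 0))
              - (m n : ℝ) * (p₁ + (1 - 2 * p₁) * R n ω)|}
          ∪ {ω | R n ω ∉ Set.Icc 0 (a n)}) := measure_mono hincl
        _ ≤ μ n {ω | (m n : ℝ) * (Δ n / 2) ≤
            |(∑ k ∈ Finset.range (m n), (if Z n k ω then (1:ℝ) else 0))
              - (m n : ℝ) * (p₁ + (1 - 2 * p₁) * R n ω)|}
          + μ n {ω | R n ω ∉ Set.Icc 0 (a n)} := measure_union_le _ _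
        _ = μ n {ω | (m n : ℝ) * (Δ n / 2) ≤
            |(∑ k ∈ Finset.range (m n), (if Z n k ω then (1:ℝ) else 0))
              - (m n : ℝ) * (p₁ + (1 - 2 * p₁) * R n ω)|} := by rw [hco, add_zero]
        _ ≤ ENNReal.ofReal (1 / (4 * (m n : ℝ) * (Δ n / 2) ^ 2)) := hKey
        _ ≤ δ n := ENNReal.ofReal_le_ofReal hratio
    rw [tsub_le_iff_right]
    calc (1 : ENNReal) = μ n Set.univ := (measure_univ (μ := μ n)).symm
      _ ≤ μ n ({ω |
          (∑ k ∈ Finset.range (m n), (if Z n k ω then (1:ℝ) else 0)) / (m n : ℝ)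
            ∈ Set.Icc (p₁ - Δ n) (p₁ + Δ n) ∩ Set.Ioo 0 1} ∪ {ω |
          (∑ k ∈ Finset.range (m n), (if Z n k ω then (1:ℝ) else 0)) / (m n : ℝ)
            ∈ Set.Icc (p₁ - Δ n) (p₁ + Δ n) ∩ Set.Ioo 0 1}ᶜ) := by
          rw [Set.union_compl_self]
      _ ≤ μ n {ω |
          (∑ k ∈ Finset.range (m n), (if Z n k ω then (1:ℝ) else 0)) / (m n : ℝ)
            ∈ Set.Icc (p₁ - Δ n) (p₁ + Δ n) ∩ Set.Ioo 0 1} + μ n {ω |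
          (∑ k ∈ Finset.range (m n), (if Z n k ω then (1:ℝ) else 0)) / (m n : ℝ)
            ∈ Set.Icc (p₁ - Δ n) (p₁ + Δ n) ∩ Set.Ioo 0 1}ᶜ := measure_union_le _ _
      _ ≤ μ n {ω |
          (∑ k ∈ Finset.range (m n), (if Z n k ω then (1:ℝ) else 0)) / (m n : ℝ)
            ∈ Set.Icc (p₁ - Δ n) (p₁ + Δ n) ∩ Set.Ioo 0 1} + δ n :=
          add_le_add_right hcompl _
  -- squeeze
  have hlow : Tendsto (fun n => 1 - δ n) atTop (nhds 1) := by
    have := ENNReal.Tendsto.sub (tendsto_const_nhds (x := (1 : ENNReal)) (f := atTop)) hδ0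
      (Or.inl ENNReal.one_ne_top)
    simpa using this
  refine tendsto_of_tendsto_of_tendsto_of_le_of_le' hlow tendsto_const_nhds hmain ?_
  exact Filter.Eventually.of_forall fun n => prob_le_one

end
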